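/- If σ is a shedding face of a simplicial complex Δ such that both Δ\σ and link_Δ σ are shellable, then Δ is shellable. -/

import Mathlib

variable {ι : Type*} [DecidableEq ι]

/-- A clutter: an antichain of finite sets (no circuit properly contains another). -/
def IsClutter (C : Set (Finset ι)) : Prop :=
  ∀ e₁ ∈ C, ∀ e₂ ∈ C, e₁ ⊆ e₂ → e₁ = e₂

/-- The independence complex of the clutter with circuit set `C` on ground set `V`:
faces are the subsets of `V` containing no circuit. -/
def indepOn (V : Finset ι) (C : Set (Finset ι)) : Set (Finset ι) :=
  {σ | σ ⊆ V ∧ ∀ e ∈ C, ¬ e ⊆ σ}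

/-- The minimal members of a family of finite sets. -/
def minimalSets (S : Set (Finset ι)) : Set (Finset ι) :=
  {e | e ∈ S ∧ ∀ f ∈ S, f ⊆ e → f = e}

/-- Deletion of a vertex from a clutter: keep the circuits avoiding `v`. -/
def clDel (C : Set (Finset ι)) (v : ι) : Set (Finset ι) :=
  {e | e ∈ C ∧ v ∉ e}

/-- Contraction of a vertex in a clutter: minimal sets among `{e \ {v}}`. -/
def clCon (C : Set (Finset ι)) (v : ι) : Set (Finset ι) :=
  minimalSets ((fun e => e.erase v) '' C)

/-- A simplicial complex: a family of finite sets closed under taking subsets. -/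
def IsComplex (Δ : Set (Finset ι)) : Prop :=
  ∀ σ ∈ Δ, ∀ τ, τ ⊆ σ → τ ∈ Δ

/-- The link of a face `σ`. -/
def link (Δ : Set (Finset ι)) (σ : Finset ι) : Set (Finset ι) :=
  {τ | Disjoint τ σ ∧ τ ∪ σ ∈ Δ}

/-- The face-deletion `Δ \ σ`: faces of `Δ` not containing `σ`. -/
def delFace (Δ : Set (Finset ι)) (σ : Finset ι) : Set (Finset ι) :=
  {τ | τ ∈ Δ ∧ ¬ σ ⊆ τ}

/-- The star of a face `σ`, as a subcomplex. -/
def starC (Δ : Set (Finset ι)) (σ : Finset ι) : Set (Finset ι) :=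
  {τ | τ ∈ Δ ∧ τ ∪ σ ∈ Δ}

/-- A facet: a maximal face. -/
def IsFacet (Δ : Set (Finset ι)) (σ : Finset ι) : Prop :=
  σ ∈ Δ ∧ ∀ τ ∈ Δ, σ ⊆ τ → σ = τ

/-- A shedding face: every face `τ` of the star of `σ` satisfies the exchange property:
for every `v ∈ σ` there is `w ∉ τ` with `(τ ∪ {w}) \ {v}` a face. -/
def SheddingFace (Δ : Set (Finset ι)) (σ : Finset ι) : Prop :=
  ∀ τ ∈ Δ, σ ⊆ τ → ∀ v ∈ σ, ∃ w, w ∉ τ ∧ (insert w τ).erase v ∈ Δ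

/-- Shellability (Björner–Wachs form): an ordering `f 0, f 1, …` of the facets such
that for all `i < j` there are `k < j` and `x ∈ f j` with
`f i ∩ f j ⊆ f k ∩ f j = f j \ {x}`. -/
def Shellable (Δ : Set (Finset ι)) : Prop :=
  ∃ (m : ℕ) (f : Fin m → Finset ι),
    Function.Injective f ∧
    (∀ σ, IsFacet Δ σ ↔ ∃ i, f i = σ) ∧
    ∀ i j : Fin m, i < j →
      ∃ k, k < j ∧ ∃ x ∈ f j, f i ∩ f j ⊆ f k ∩ f j ∧ f k ∩ f j = (f j).erase x

/-- `k`-decomposability (for possibly non-pure complexes): a complex is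
`k`-decomposable if it is a simplex (or degenerate), or has a shedding face of
dimension at most `k` whose deletion and link are both `k`-decomposable. -/
inductive KDecomposable : ℤ → Set (Finset ι) → Prop
  | of_empty (k : ℤ) : KDecomposable k ∅
  | of_simplex (k : ℤ) (σ : Finset ι) : KDecomposable k {τ | τ ⊆ σ}
  | of_shed (k : ℤ) (Δ : Set (Finset ι)) (σ : Finset ι) (hσ : σ ∈ Δ)
      (hne : σ.Nonempty) (hdim : (σ.card : ℤ) ≤ k + 1)
      (hshed : SheddingFace Δ σ)
      (h₁ : KDecomposable k (delFace Δ σ)) (h₂ : KDecomposable k (link Δ σ)) :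
      KDecomposable k Δ

/-- A simplicial vertex of a clutter: any two distinct circuits `e₁, e₂` containing `v`
admit a third circuit `e₃ ⊆ (e₁ ∪ e₂) \ {v}`. -/
def SimplicialVertex (C : Set (Finset ι)) (v : ι) : Prop :=
  ∀ e₁ ∈ C, ∀ e₂ ∈ C, e₁ ≠ e₂ → v ∈ e₁ → v ∈ e₂ →
    ∃ e₃ ∈ C, e₃ ⊆ (e₁ ∪ e₂).erase v

/-- Minors of a clutter (with ground set): obtained by repeated deletions and contractions. -/
inductive Minor : Finset ι → Set (Finset ι) → Finset ι → Set (Finset ι) → Prop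
  | refl (V : Finset ι) (C : Set (Finset ι)) : Minor V C V C
  | del {V C W D} (v : ι) (hv : v ∈ W) (h : Minor V C W D) :
      Minor V C (W.erase v) (clDel D v)
  | con {V C W D} (v : ι) (hv : v ∈ W) (h : Minor V C W D) :
      Minor V C (W.erase v) (clCon D v)

/-- Contractions of a clutter (with ground set): obtained by repeated contractions. -/
inductive ConMinor : Finset ι → Set (Finset ι) → Finset ι → Set (Finset ι) → Prop
  | refl (V : Finset ι) (C : Set (Finset ι)) : ConMinor V C V C
  | con {V C W D} (v : ι) (hv : v ∈ W) (h : ConMinor V C W D) :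
      ConMinor V C (W.erase v) (clCon D v)

/-- A clutter is chordal if every minor with at least one vertex has a simplicial vertex. -/
def Chordal (V : Finset ι) (C : Set (Finset ι)) : Prop :=
  ∀ W D, Minor V C W D → W.Nonempty → ∃ v ∈ W, SimplicialVertex D v

/-- Clutter of minimal non-faces of a complex `Δ` on ground set `V`. -/
def nonfaceClutter (V : Finset ι) (Δ : Set (Finset ι)) : Set (Finset ι) :=
  {e | e ⊆ V ∧ e ∉ Δ ∧ ∀ e', e' ⊂ e → e' ∈ Δ}

/-- `cNon V C d`: the `d`-non-circuits of `C`, i.e. the `d`-subsets of `V`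
that are not circuits of `C`. -/
def cNon (V : Finset ι) (C : Set (Finset ι)) (d : ℕ) : Set (Finset ι) :=
  {e | e ⊆ V ∧ e.card = d ∧ e ∉ C}

/-- Combinatorial Alexander dual of a complex on ground set `V`. -/
def alexDual (V : Finset ι) (Δ : Set (Finset ι)) : Set (Finset ι) :=
  {σ | σ ⊆ V ∧ V \ σ ∉ Δ}

/-- Join of two complexes. -/
def joinC (Δ₁ Δ₂ : Set (Finset ι)) : Set (Finset ι) :=
  {σ | ∃ σ₁ ∈ Δ₁, ∃ σ₂ ∈ Δ₂, σ = σ₁ ∪ σ₂}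


/-- Every face of a family of finite sets (over a finite vertex set) is contained
in a facet. -/
lemma aux_exists_facet [Fintype ι] (S : Set (Finset ι)) {τ : Finset ι} (h : τ ∈ S) :
    ∃ F, IsFacet S F ∧ τ ⊆ F := by
  obtain ⟨F, ⟨hFS, hτF⟩, hmax⟩ := Set.Finite.exists_maximalFor Finset.card
    {F | F ∈ S ∧ τ ⊆ F} (Set.toFinite _) ⟨τ, h, subset_rfl⟩
  exact ⟨F, ⟨hFS, fun G hG hFG => Finset.eq_of_subset_of_card_le hFG
    (hmax ⟨hG, hτF.trans hFG⟩ (Finset.card_le_card hFG))⟩, hτF⟩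

/-- If `σ` is a shedding face, every facet of the deletion is a facet of `Δ`. -/
lemma aux_del_facet (Δ : Set (Finset ι)) (hΔ : IsComplex Δ) (σ : Finset ι)
    (hshed : SheddingFace Δ σ) {F : Finset ι} (hF : IsFacet (delFace Δ σ) F) :
    IsFacet Δ F := by
  obtain ⟨⟨hFΔ, hFσ⟩, hmax⟩ := hF
  refine ⟨hFΔ, fun G hG hFG => ?_⟩
  by_contra hne
  obtain ⟨x, hxG, hxF⟩ := Finset.exists_of_ssubset (hFG.ssubset_of_ne hne)
  have hins : insert x F ∈ Δ := hΔ G hG _ (Finset.insert_subset hxG hFG)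
  have hσins : σ ⊆ insert x F := by
    by_contra hno
    have := hmax (insert x F) ⟨hins, hno⟩ (Finset.subset_insert _ _)
    exact hxF (this ▸ Finset.mem_insert_self x F)
  have hxσ : x ∈ σ := by
    by_contra hxσ
    exact hFσ fun a ha => (Finset.mem_insert.1 (hσins ha)).resolve_left
      (fun h => hxσ (h ▸ ha))
  obtain ⟨w, hw, hwΔ⟩ := hshed (insert x F) hins hσins x hxσ
  have hwx : w ≠ x := fun h => hw (h ▸ Finset.mem_insert_self x F)
  have hwF : w ∉ F := fun h => hw (Finset.mem_insert_of_mem h)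
  have heq : (insert w (insert x F)).erase x = insert w F := by
    ext a
    simp only [Finset.mem_erase, Finset.mem_insert]
    constructor
    · rintro ⟨hax, (rfl | rfl | haF)⟩
      · exact Or.inl rfl
      · exact absurd rfl hax
      · exact Or.inr haF
    · rintro (rfl | haF)
      · exact ⟨hwx, Or.inl rfl⟩
      · exact ⟨fun h => hxF (h ▸ haF), Or.inr (Or.inr haF)⟩
  rw [heq] at hwΔ
  have hnotσ : ¬ σ ⊆ insert w F := fun h => by
    rcases Finset.mem_insert.1 (h hxσ) with h' | h'
    · exact hwx h'.symm
    · exact hxF h'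
  have := hmax (insert w F) ⟨hwΔ, hnotσ⟩ (Finset.subset_insert _ _)
  exact hwF (this ▸ Finset.mem_insert_self w F)

/-- Every facet of the link, joined with `σ`, is a facet of `Δ`. -/
lemma aux_link_facet (Δ : Set (Finset ι)) (σ : Finset ι)
    {L : Finset ι} (hL : IsFacet (link Δ σ) L) : IsFacet Δ (L ∪ σ) := by
  obtain ⟨⟨hdisj, hLΔ⟩, hmax⟩ := hL
  refine ⟨hLΔ, fun G hG hsub => ?_⟩
  have hσG : σ ⊆ G := (Finset.union_subset_iff.1 hsub).2
  have hGσ : G \ σ ∈ link Δ σ := ⟨Finset.sdiff_disjoint, by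
    rwa [Finset.sdiff_union_of_subset hσG]⟩
  have hLsub : L ⊆ G \ σ := fun a ha => Finset.mem_sdiff.2
    ⟨hsub (Finset.mem_union_left _ ha), Finset.disjoint_left.1 hdisj ha⟩
  have := hmax _ hGσ hLsub
  rw [this, Finset.sdiff_union_of_subset hσG]

/-- A facet of `Δ` containing `σ` gives a facet of the link. -/
lemma aux_facet_link (Δ : Set (Finset ι)) (σ : Finset ι)
    {F : Finset ι} (hF : IsFacet Δ F) (hσF : σ ⊆ F) :
    IsFacet (link Δ σ) (F \ σ) := by
  obtain ⟨hFΔ, hmax⟩ := hF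
  refine ⟨⟨Finset.sdiff_disjoint, by rwa [Finset.sdiff_union_of_subset hσF]⟩,
    fun M hM hsub => ?_⟩
  obtain ⟨hMdisj, hMΔ⟩ := hM
  have hFsub : F ⊆ M ∪ σ := by
    intro a ha
    by_cases haσ : a ∈ σ
    · exact Finset.mem_union_right _ haσ
    · exact Finset.mem_union_left _ (hsub (Finset.mem_sdiff.2 ⟨ha, haσ⟩))
  have := hmax _ hMΔ hFsub
  apply Finset.Subset.antisymm hsub
  intro a ha
  refine Finset.mem_sdiff.2 ⟨?_, Finset.disjoint_left.1 hMdisj ha⟩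
  rw [this]; exact Finset.mem_union_left _ ha

/-- The combined facet ordering: deletion facets first, then star facets. -/
def combineF {m₁ m₂ : ℕ} (f₁ : Fin m₁ → Finset ι) (g : Fin m₂ → Finset ι)
    (σ : Finset ι) (i : Fin (m₁ + m₂)) : Finset ι :=
  if h : (i : ℕ) < m₁ then f₁ ⟨i, h⟩
  else g ⟨(i : ℕ) - m₁, by have := i.isLt; omega⟩ ∪ σ

lemma combineF_lo {m₁ m₂ : ℕ} (f₁ : Fin m₁ → Finset ι) (g : Fin m₂ → Finset ι)
    (σ : Finset ι) (i : Fin (m₁ + m₂)) (i' : Fin m₁) (h : (i : ℕ) = (i' : ℕ)) :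
    combineF f₁ g σ i = f₁ i' := by
  have hi : (i : ℕ) < m₁ := by have := i'.isLt; omega
  rw [combineF, dif_pos hi]
  exact congrArg f₁ (Fin.ext h)

lemma combineF_hi {m₁ m₂ : ℕ} (f₁ : Fin m₁ → Finset ι) (g : Fin m₂ → Finset ι)
    (σ : Finset ι) (i : Fin (m₁ + m₂)) (i' : Fin m₂) (h : (i : ℕ) = m₁ + (i' : ℕ)) :
    combineF f₁ g σ i = g i' ∪ σ := by
  have hi : ¬ (i : ℕ) < m₁ := by omega
  rw [combineF, dif_neg hi]
  refine congrArg (· ∪ σ) (congrArg g (Fin.ext ?_))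
  show (i : ℕ) - m₁ = (i' : ℕ)
  omega

/-- if `σ` is a shedding face and both `Δ\σ` and `link_Δ σ` are
shellable, then `Δ` is shellable. -/
theorem stmt5 [Fintype ι] (Δ : Set (Finset ι)) (hΔ : IsComplex Δ)
    (σ : Finset ι) (hσ : σ ∈ Δ) (hshed : SheddingFace Δ σ)
    (h₁ : Shellable (delFace Δ σ)) (h₂ : Shellable (link Δ σ)) :
    Shellable Δ := by
  classical
  by_cases hσe : σ = ∅
  · subst hσe
    have hl : link Δ ∅ = Δ := by ext τ; simp [link]
    rwa [hl] at h₂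
  have hσne : σ.Nonempty := Finset.nonempty_iff_ne_empty.2 hσe
  obtain ⟨m₁, f₁, inj₁, fac₁, sh₁⟩ := h₁
  obtain ⟨m₂, g, inj₂, fac₂, sh₂⟩ := h₂
  have hdel : ∀ i : Fin m₁, IsFacet (delFace Δ σ) (f₁ i) :=
    fun i => (fac₁ (f₁ i)).2 ⟨i, rfl⟩
  have hlk : ∀ j : Fin m₂, IsFacet (link Δ σ) (g j) :=
    fun j => (fac₂ (g j)).2 ⟨j, rfl⟩
  have hdelF : ∀ i : Fin m₁, IsFacet Δ (f₁ i) :=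
    fun i => aux_del_facet Δ hΔ σ hshed (hdel i)
  have hlkF : ∀ j : Fin m₂, IsFacet Δ (g j ∪ σ) :=
    fun j => aux_link_facet Δ σ (hlk j)
  have hnσ : ∀ i : Fin m₁, ¬ σ ⊆ f₁ i := fun i => (hdel i).1.2
  have hdisj : ∀ j : Fin m₂, Disjoint (g j) σ := fun j => (hlk j).1.1
  refine ⟨m₁ + m₂, combineF f₁ g σ, ?_, ?_, ?_⟩
  · -- injectivity
    intro i j hij
    by_cases hi : (i : ℕ) < m₁ <;> by_cases hj : (j : ℕ) < m₁
    · rw [combineF_lo f₁ g σ i ⟨i, hi⟩ rfl, combineF_lo f₁ g σ j ⟨j, hj⟩ rfl] at hij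
      exact Fin.ext (Fin.mk_eq_mk.mp (inj₁ hij))
    · rw [combineF_lo f₁ g σ i ⟨i, hi⟩ rfl,
        combineF_hi f₁ g σ j ⟨(j : ℕ) - m₁, by omega⟩ (by show _ = m₁ + ((j:ℕ) - m₁); omega)] at hij
      exact absurd (hij ▸ Finset.subset_union_right) (hnσ ⟨i, hi⟩)
    · rw [combineF_lo f₁ g σ j ⟨j, hj⟩ rfl,
        combineF_hi f₁ g σ i ⟨(i : ℕ) - m₁, by omega⟩ (by show _ = m₁ + ((i:ℕ) - m₁); omega)] at hij
      exact absurd (hij.symm ▸ Finset.subset_union_right) (hnσ ⟨j, hj⟩)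
    · rw [combineF_hi f₁ g σ i ⟨(i : ℕ) - m₁, by omega⟩ (by show _ = m₁ + ((i:ℕ) - m₁); omega),
        combineF_hi f₁ g σ j ⟨(j : ℕ) - m₁, by omega⟩ (by show _ = m₁ + ((j:ℕ) - m₁); omega)] at hij
      have hg : g ⟨(i : ℕ) - m₁, by omega⟩ = g ⟨(j : ℕ) - m₁, by omega⟩ := by
        have h1 := Finset.union_sdiff_cancel_right (hdisj ⟨(i : ℕ) - m₁, by omega⟩)
        have h2 := Finset.union_sdiff_cancel_right (hdisj ⟨(j : ℕ) - m₁, by omega⟩)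
        rw [← h1, ← h2, hij]
      have hv : (i : ℕ) - m₁ = (j : ℕ) - m₁ := Fin.mk_eq_mk.mp (inj₂ hg)
      exact Fin.ext (by omega)
  · -- facet characterization
    intro τ
    constructor
    · intro hτ
      by_cases hστ : σ ⊆ τ
      · obtain ⟨j, hj⟩ := (fac₂ (τ \ σ)).1 (aux_facet_link Δ σ hτ hστ)
        refine ⟨⟨m₁ + (j : ℕ), by omega⟩, ?_⟩
        rw [combineF_hi f₁ g σ _ j rfl, hj, Finset.sdiff_union_of_subset hστ]
      · have hfd : IsFacet (delFace Δ σ) τ :=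
          ⟨⟨hτ.1, hστ⟩, fun τ' hτ' hsub => hτ.2 τ' hτ'.1 hsub⟩
        obtain ⟨i, hi⟩ := (fac₁ τ).1 hfd
        refine ⟨⟨(i : ℕ), by omega⟩, ?_⟩
        rw [combineF_lo f₁ g σ _ i rfl, hi]
    · rintro ⟨i, rfl⟩
      by_cases hi : (i : ℕ) < m₁
      · rw [combineF_lo f₁ g σ i ⟨i, hi⟩ rfl]; exact hdelF _
      · rw [combineF_hi f₁ g σ i ⟨(i : ℕ) - m₁, by omega⟩ (by show _ = m₁ + ((i:ℕ) - m₁); omega)]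
        exact hlkF _
  · -- shelling condition
    intro i j hij
    have hijv : (i : ℕ) < (j : ℕ) := hij
    by_cases hj : (j : ℕ) < m₁
    · -- both in the deletion part
      have hi : (i : ℕ) < m₁ := by omega
      obtain ⟨k, hk, x, hx, hsub, heq⟩ := sh₁ ⟨i, hi⟩ ⟨j, hj⟩ hijv
      have hkv : (k : ℕ) < (j : ℕ) := hk
      refine ⟨⟨(k : ℕ), by omega⟩, hkv, x, ?_⟩
      rw [combineF_lo f₁ g σ i ⟨i, hi⟩ rfl, combineF_lo f₁ g σ j ⟨j, hj⟩ rfl,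
        combineF_lo f₁ g σ ⟨(k : ℕ), by omega⟩ k rfl]
      exact ⟨hx, hsub, heq⟩
    · by_cases hi : (i : ℕ) < m₁
      · -- i in deletion, j in star
        obtain ⟨j', hj'⟩ : ∃ j' : Fin m₂, (j : ℕ) = m₁ + (j' : ℕ) :=
          ⟨⟨(j : ℕ) - m₁, by omega⟩, by simp only [Fin.val_mk]; omega⟩
        obtain ⟨v, hvσ, hvf⟩ := Finset.not_subset.1 (hnσ ⟨i, hi⟩)
        have hFΔ : g j' ∪ σ ∈ Δ := (hlkF j').1
        have hEdel : (g j' ∪ σ).erase v ∈ delFace Δ σ := by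
          refine ⟨hΔ _ hFΔ _ (Finset.erase_subset _ _), fun h => ?_⟩
          exact (Finset.mem_erase.1 (h hvσ)).1 rfl
        obtain ⟨F', hF', hsubF'⟩ := aux_exists_facet _ hEdel
        obtain ⟨k, hk⟩ := (fac₁ F').1 hF'
        refine ⟨⟨(k : ℕ), by omega⟩, by simp only [Fin.lt_def, Fin.val_mk]; omega, v, ?_⟩
        rw [combineF_lo f₁ g σ i ⟨i, hi⟩ rfl, combineF_lo f₁ g σ ⟨(k : ℕ), by omega⟩ k rfl,
          combineF_hi f₁ g σ j j' hj']
        have hvF : v ∈ g j' ∪ σ := Finset.mem_union_right _ hvσ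
        have hvk : v ∉ f₁ k := by
          intro hvk
          apply hnσ k
          intro a ha
          by_cases hav : a = v
          · exact hav ▸ hvk
          · exact hk ▸ hsubF' (Finset.mem_erase.2 ⟨hav, Finset.mem_union_right _ ha⟩)
        have heq : f₁ k ∩ (g j' ∪ σ) = (g j' ∪ σ).erase v := by
          apply Finset.Subset.antisymm
          · intro a ha
            obtain ⟨ha1, ha2⟩ := Finset.mem_inter.1 ha
            exact Finset.mem_erase.2 ⟨fun h => hvk (h ▸ ha1), ha2⟩
          · intro a ha
            exact Finset.mem_inter.2 ⟨hk ▸ hsubF' ha, Finset.mem_of_mem_erase ha⟩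
        refine ⟨hvF, ?_, heq⟩
        rw [heq]
        intro a ha
        obtain ⟨ha1, ha2⟩ := Finset.mem_inter.1 ha
        exact Finset.mem_erase.2 ⟨fun h => hvf (h ▸ ha1), ha2⟩
      · -- both in the star part
        obtain ⟨i', hi'⟩ : ∃ i' : Fin m₂, (i : ℕ) = m₁ + (i' : ℕ) :=
          ⟨⟨(i : ℕ) - m₁, by omega⟩, by simp only [Fin.val_mk]; omega⟩
        obtain ⟨j', hj'⟩ : ∃ j' : Fin m₂, (j : ℕ) = m₁ + (j' : ℕ) :=
          ⟨⟨(j : ℕ) - m₁, by omega⟩, by simp only [Fin.val_mk]; omega⟩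
        have hij' : i' < j' := by simp only [Fin.lt_def, Fin.val_mk]; omega
        obtain ⟨k, hk, x, hx, hsub, heq⟩ := sh₂ i' j' hij'
        have hkv : (k : ℕ) < (j' : ℕ) := hk
        refine ⟨⟨m₁ + (k : ℕ), by omega⟩, by simp only [Fin.lt_def, Fin.val_mk]; omega, x, ?_⟩
        rw [combineF_hi f₁ g σ i i' hi', combineF_hi f₁ g σ j j' hj',
          combineF_hi f₁ g σ ⟨m₁ + (k : ℕ), by omega⟩ k rfl]
        have hxσ : x ∉ σ := Finset.disjoint_left.1 (hdisj j') hx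
        have hcap : ∀ a b : Fin m₂, (g a ∪ σ) ∩ (g b ∪ σ) = (g a ∩ g b) ∪ σ := by
          intro a b
          ext y
          simp only [Finset.mem_inter, Finset.mem_union]
          tauto
        have herase : g k ∩ g j' ∪ σ = (g j' ∪ σ).erase x := by
          rw [heq]
          ext y
          simp only [Finset.mem_union, Finset.mem_erase]
          constructor
          · rintro (⟨hyx, hy⟩ | hy)
            · exact ⟨hyx, Or.inl hy⟩
            · exact ⟨fun h => hxσ (h ▸ hy), Or.inr hy⟩
          · rintro ⟨hyx, (hy | hy)⟩
            · exact Or.inl ⟨hyx, hy⟩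
            · exact Or.inr hy
        refine ⟨Finset.mem_union_left _ hx, ?_, ?_⟩
        · rw [hcap, hcap]
          exact Finset.union_subset_union_left hsub
        · rw [hcap, herase]
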